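/- For every countable dense group-like subset D of [0,1), there exists a non-compact locally compact Cantor set X and a good full non-atomic Borel probability measure μ on X with S(μ) = D. -/

import Mathlib

open MeasureTheory Topology ENNReal TopologicalSpace

/-- A set is compact open. -/
def IsCompactOpen {X : Type*} [TopologicalSpace X] (U : Set X) : Prop :=
  IsCompact U ∧ IsOpen U

/-- The defective set of a measure: points all of whose compact open
neighbourhoods have infinite measure. -/
def DefectiveSet {X : Type*} [TopologicalSpace X] [MeasurableSpace X]
    (μ : Measure X) : Set X :=
  {x | ∀ U : Set X, IsCompactOpen U → x ∈ U → μ U = ⊤}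

/-- A compact open set `V` is good for `μ`. -/
def GoodSet {X : Type*} [TopologicalSpace X] [MeasurableSpace X]
    (μ : Measure X) (V : Set X) : Prop :=
  ∀ U : Set X, IsCompactOpen U → μ U < μ V →
    ∃ W : Set X, W ⊆ V ∧ IsCompactOpen W ∧ μ W = μ U

/-- The measure `μ` is good: every compact open set is good for `μ`. -/
def Good {X : Type*} [TopologicalSpace X] [MeasurableSpace X]
    (μ : Measure X) : Prop :=
  ∀ V : Set X, IsCompactOpen V → GoodSet μ V

/-- The restriction of `μ` to the (open) subset `A` is good: compact open
subsets of the subspace `A` are exactly compact open subsets of `X` contained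
in `A`. -/
def GoodOn {X : Type*} [TopologicalSpace X] [MeasurableSpace X]
    (μ : Measure X) (A : Set X) : Prop :=
  ∀ U V : Set X, IsCompactOpen U → U ⊆ A → IsCompactOpen V → V ⊆ A → μ U < μ V →
    ∃ W : Set X, W ⊆ V ∧ IsCompactOpen W ∧ μ W = μ U

/-- The compact open values set, as a set of extended nonnegative reals. -/
def SE {X : Type*} [TopologicalSpace X] [MeasurableSpace X]
    (μ : Measure X) : Set ℝ≥0∞ :=
  {v | v ≠ ⊤ ∧ ∃ U : Set X, IsCompactOpen U ∧ μ U = v}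

/-- The compact open values set of the restriction of `μ` to `A`. -/
def SEOn {X : Type*} [TopologicalSpace X] [MeasurableSpace X]
    (μ : Measure X) (A : Set X) : Set ℝ≥0∞ :=
  {v | v ≠ ⊤ ∧ ∃ U : Set X, IsCompactOpen U ∧ U ⊆ A ∧ μ U = v}

/-- The compact open values set, as a set of reals. -/
def Sreal {X : Type*} [TopologicalSpace X] [MeasurableSpace X]
    (μ : Measure X) : Set ℝ :=
  {r | ∃ U : Set X, IsCompactOpen U ∧ μ U ≠ ⊤ ∧ (μ U).toReal = r}

/-- The compact open values set of the restriction of `μ` to `A`, as reals. -/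
def SrealOn {X : Type*} [TopologicalSpace X] [MeasurableSpace X]
    (μ : Measure X) (A : Set X) : Set ℝ :=
  {r | ∃ U : Set X, IsCompactOpen U ∧ U ⊆ A ∧ μ U ≠ ⊤ ∧ (μ U).toReal = r}

/-- A measure is full if every non-empty open set has positive measure. -/
def IsFull {X : Type*} [TopologicalSpace X] [MeasurableSpace X]
    (μ : Measure X) : Prop :=
  ∀ U : Set X, IsOpen U → U.Nonempty → 0 < μ U

/-- A measure is non-atomic if every singleton has measure zero. -/
def NonAtomic {X : Type*} [MeasurableSpace X] (μ : Measure X) : Prop :=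
  ∀ x : X, μ {x} = 0

/-- The space has a countable basis consisting of compact open sets. -/
def HasCompactOpenBasis (X : Type*) [TopologicalSpace X] : Prop :=
  ∃ B : Set (Set X), B.Countable ∧ TopologicalSpace.IsTopologicalBasis B ∧
    ∀ U ∈ B, IsCompact U ∧ IsOpen U

/-- The space has no isolated points. -/
def NoIsolatedPoints (X : Type*) [TopologicalSpace X] : Prop :=
  ∀ x : X, ¬ IsOpen ({x} : Set X)

section StmtDev
open Set

namespace Stmt15

structure Ctx where
  D : Set ℝ
  G : AddSubgroup ℝ
  hcountD : D.Countable
  hD : D ⊆ Set.Ico (0:ℝ) 1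
  hdense : Set.Ico (0:ℝ) 1 ⊆ closure D
  hgrp : D = {x : ℝ | x ∈ G ∧ x ∈ Set.Ico (0:ℝ) 1}
  w : ↥(D \ {0}) → ℝ
  hwpos : ∀ d, 0 < w d
  hwsum : Summable w

namespace Ctx
variable (c : Ctx)

lemma mem_D_iff {x : ℝ} : x ∈ c.D ↔ x ∈ c.G ∧ 0 ≤ x ∧ x < 1 := by
  conv_lhs => rw [c.hgrp]
  simp [Set.mem_Ico, Set.mem_setOf_eq]

lemma zero_mem_D : (0:ℝ) ∈ c.D := (c.mem_D_iff).2 ⟨zero_mem _, le_refl 0, one_pos⟩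

lemma dpos (d : ↥(c.D \ {0})) : 0 < (d:ℝ) ∧ (d:ℝ) < 1 := by
  obtain ⟨hd, hne⟩ := d.2
  have h := c.hD hd
  have hne' : (d:ℝ) ≠ 0 := hne
  exact ⟨lt_of_le_of_ne h.1 (Ne.symm hne'), h.2⟩

open Classical in
noncomputable def cc (r : ℝ) : ℝ := if h : r ∈ c.D \ {0} then c.w ⟨r, h⟩ else 0

lemma cc_nonneg (r : ℝ) : 0 ≤ c.cc r := by
  unfold cc; split
  · exact (c.hwpos _).le
  · exact le_refl 0

lemma cc_pos {r : ℝ} (h : r ∈ c.D \ {0}) : 0 < c.cc r := by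
  unfold cc; rw [dif_pos h]; exact c.hwpos _

lemma cc_eq_zero {r : ℝ} (h : r ∉ c.D \ {0}) : c.cc r = 0 := by
  unfold cc; rw [dif_neg h]

lemma summable_ite (P : ↥(c.D \ {0}) → Prop) [DecidablePred P] :
    Summable (fun d => if P d then c.w d else 0) := by
  refine Summable.of_nonneg_of_le (fun d => ?_) (fun d => ?_) c.hwsum
  · split
    · exact (c.hwpos _).le
    · exact le_refl 0
  · split
    · exact le_refl _
    · exact (c.hwpos _).le

noncomputable def S (t : ℝ) : ℝ := ∑' d : ↥(c.D \ {0}), if (d:ℝ) ≤ t then c.w d else 0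
noncomputable def SI (a b : ℝ) : ℝ :=
  ∑' d : ↥(c.D \ {0}), if a < (d:ℝ) ∧ (d:ℝ) < b then c.w d else 0
noncomputable def SIc (a b : ℝ) : ℝ :=
  ∑' d : ↥(c.D \ {0}), if a < (d:ℝ) ∧ (d:ℝ) ≤ b then c.w d else 0
noncomputable def T : ℝ := ∑' d, c.w d
noncomputable def L : ℝ := 1 + c.T
noncomputable def g (t : ℝ) : ℝ := t + c.S t

lemma S_nonneg (t : ℝ) : 0 ≤ c.S t := by
  refine tsum_nonneg fun d => ?_
  split
  · exact (c.hwpos _).le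
  · exact le_refl 0

lemma SI_nonneg (a b : ℝ) : 0 ≤ c.SI a b := by
  refine tsum_nonneg fun d => ?_
  split
  · exact (c.hwpos _).le
  · exact le_refl 0

lemma SIc_nonneg (a b : ℝ) : 0 ≤ c.SIc a b := by
  refine tsum_nonneg fun d => ?_
  split
  · exact (c.hwpos _).le
  · exact le_refl 0

lemma S_mono {t u : ℝ} (h : t ≤ u) : c.S t ≤ c.S u := by
  refine Summable.tsum_le_tsum (fun d => ?_) (c.summable_ite _) (c.summable_ite _)
  by_cases hd : (d:ℝ) ≤ t
  · rw [if_pos hd, if_pos (hd.trans h)]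
  · rw [if_neg hd]
    split
    · exact (c.hwpos _).le
    · exact le_refl 0

lemma S_le_T (t : ℝ) : c.S t ≤ c.T := by
  refine Summable.tsum_le_tsum (fun d => ?_) (c.summable_ite _) c.hwsum
  split
  · exact le_refl _
  · exact (c.hwpos _).le

lemma S_zero : c.S 0 = 0 := by
  unfold S
  have : ∀ d : ↥(c.D \ {0}), (if (d:ℝ) ≤ 0 then c.w d else 0) = 0 := fun d =>
    if_neg (not_le.2 (c.dpos d).1)
  simp only [this, tsum_zero]

lemma g_zero : c.g 0 = 0 := by simp [g, S_zero]

lemma split6 {a b : ℝ} (h : a ≤ b) : c.S b = c.S a + c.SIc a b := by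
  unfold S SIc
  rw [← Summable.tsum_add (c.summable_ite _) (c.summable_ite _)]
  refine tsum_congr fun d => ?_
  by_cases hd : (d:ℝ) ≤ a
  · rw [if_pos (hd.trans h), if_pos hd, if_neg (by push_neg; intro hc; exact absurd hc (not_lt.2 hd))]
    ring
  · rw [if_neg hd]
    push_neg at hd
    by_cases hdb : (d:ℝ) ≤ b
    · rw [if_pos hdb, if_pos ⟨hd, hdb⟩]; ring
    · rw [if_neg hdb, if_neg (fun hc => hdb hc.2)]; ring

lemma tsum_eqb (b : ℝ) :
    (∑' d : ↥(c.D \ {0}), if (d:ℝ) = b then c.w d else 0) = c.cc b := by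
  by_cases hb : b ∈ c.D \ {0}
  · rw [tsum_eq_single (⟨b, hb⟩ : ↥(c.D \ {0}))]
    · rw [if_pos rfl, cc, dif_pos hb]
    · intro d hd
      refine if_neg fun hc => hd ?_
      exact Subtype.ext hc
  · rw [c.cc_eq_zero hb]
    have : ∀ d : ↥(c.D \ {0}), (if (d:ℝ) = b then c.w d else 0) = 0 := by
      intro d
      refine if_neg fun hc => hb ?_
      rw [← hc]; exact d.2
    simp only [this, tsum_zero]

lemma splitcc {a b : ℝ} (h : a < b) : c.SIc a b = c.SI a b + c.cc b := by
  unfold SIc SI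
  rw [← c.tsum_eqb b, ← Summable.tsum_add (c.summable_ite _) (c.summable_ite _)]
  refine tsum_congr fun d => ?_
  by_cases hdb : (d:ℝ) = b
  · rw [if_pos hdb, if_pos ⟨by rw [hdb]; exact h, le_of_eq hdb⟩,
      if_neg (fun hc => absurd hdb (ne_of_lt hc.2))]
    ring
  · rw [if_neg hdb]
    by_cases hd : a < (d:ℝ) ∧ (d:ℝ) ≤ b
    · rw [if_pos hd, if_pos ⟨hd.1, lt_of_le_of_ne hd.2 hdb⟩]; ring
    · rw [if_neg hd, if_neg (fun hc => hd ⟨hc.1, hc.2.le⟩)]; ring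

lemma S_one : c.S 1 = c.T := by
  unfold S T
  refine tsum_congr fun d => if_pos (c.dpos d).2.le

lemma glcc {a b : ℝ} (h : a < b) : c.g b - c.cc b = c.g a + (b - a) + c.SI a b := by
  have h1 := c.split6 h.le
  have h2 := c.splitcc h
  simp only [g]
  linarith

lemma g_mono : Monotone c.g := fun a b h => by
  have := c.S_mono h
  simp only [g]; linarith

lemma g_strictMono : StrictMono c.g := fun a b h => by
  have := c.S_mono h.le
  simp only [g]; linarith

lemma lt_gcc {a b : ℝ} (h : a < b) : c.g a < c.g b - c.cc b := by
  have := c.glcc h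
  have h2 := c.SI_nonneg a b
  linarith

lemma gcc_lt {b : ℝ} (hb : b ∈ c.D \ {0}) : c.g b - c.cc b < c.g b := by
  have := c.cc_pos hb; linarith

lemma g_nonneg {t : ℝ} (h : 0 ≤ t) : 0 ≤ c.g t := by
  have := c.g_mono h; rw [g_zero] at this; exact this

lemma g_lt_L {t : ℝ} (h : t < 1) : c.g t < c.L := by
  have := c.S_le_T t
  simp only [g, L]; linarith

variable (c : Ctx)

lemma tail_small {ε : ℝ} (hε : 0 < ε) : ∃ F : Finset ↥(c.D \ {0}),
    ∀ (P : ↥(c.D \ {0}) → Prop) (_ : DecidablePred P), (∀ d ∈ F, ¬ P d) →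
      (∑' d, if P d then c.w d else 0) < ε := by
  have hT : Filter.Tendsto (fun F : Finset ↥(c.D \ {0}) => ∑ d ∈ F, c.w d)
      Filter.atTop (nhds c.T) := c.hwsum.hasSum
  have hev : ∀ᶠ F in Filter.atTop,  c.T - ε < ∑ d ∈ F, c.w d :=
    hT.eventually (eventually_gt_nhds (by linarith))
  obtain ⟨F, hF⟩ := hev.exists
  refine ⟨F, fun P hP havoid => ?_⟩
  classical
  set v : ↥(c.D \ {0}) → ℝ := fun d => if d ∈ F then 0 else c.w d with hv
  set u : ↥(c.D \ {0}) → ℝ := fun d => if d ∈ F then c.w d else 0 with hu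
  have hsv : Summable v := by
    refine Summable.of_nonneg_of_le (fun d => ?_) (fun d => ?_) c.hwsum
    · simp only [hv]; split
      · exact le_refl 0
      · exact (c.hwpos _).le
    · simp only [hv]; split
      · exact (c.hwpos _).le
      · exact le_refl _
  have hsu : Summable u := summable_of_ne_finset_zero (s := F) (fun d hd => if_neg hd)
  have huv : ∀ d, u d + v d = c.w d := by
    intro d; simp only [hu, hv]; split <;> ring
  have htu : ∑' d, u d = ∑ d ∈ F, c.w d := by
    rw [tsum_eq_sum (fun d hd => if_neg hd)]
    exact Finset.sum_congr rfl fun d hd => if_pos hd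
  have hTsplit : c.T = ∑' d, u d + ∑' d, v d := by
    rw [← Summable.tsum_add hsu hsv]
    exact tsum_congr fun d => (huv d).symm
  have hvlt : ∑' d, v d < ε := by rw [htu] at hTsplit; linarith
  have hle : (∑' d, if P d then c.w d else 0) ≤ ∑' d, v d := by
    refine Summable.tsum_le_tsum (fun d => ?_) (c.summable_ite P) hsv
    by_cases hPd : P d
    · rw [if_pos hPd]
      have hdF : d ∉ F := fun hdF => havoid d hdF hPd
      simp only [hv, if_neg hdF]
      exact le_refl _
    · rw [if_neg hPd]
      simp only [hv]; split
      · exact le_refl 0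
      · exact (c.hwpos _).le
  linarith

lemma denseD {l r : ℝ} (h0 : 0 ≤ l) (hlr : l < r) (hr : r ≤ 1) :
    ∃ p ∈ c.D, l < p ∧ p < r := by
  have hm : (l + r) / 2 ∈ Set.Ico (0:ℝ) 1 := ⟨by linarith, by linarith⟩
  have hmc := c.hdense hm
  rw [Metric.mem_closure_iff] at hmc
  obtain ⟨p, hp, hd⟩ := hmc ((r - l) / 2) (by linarith)
  rw [Real.dist_eq, abs_sub_lt_iff] at hd
  exact ⟨p, hp, by linarith [hd.1, hd.2], by linarith [hd.1, hd.2]⟩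

lemma dleft {s ε : ℝ} (hs0 : 0 < s) (hs1 : s ≤ 1) (hε : 0 < ε) :
    ∃ a ∈ c.D, 0 ≤ a ∧ a < s ∧ (s - a) + c.SI a s < ε := by
  classical
  obtain ⟨F, hF⟩ := c.tail_small (show 0 < ε/2 by linarith)
  set Fs : Finset ℝ := insert 0 ((F.image (Subtype.val)).filter (· < s)) with hFs
  have hne : Fs.Nonempty := ⟨0, Finset.mem_insert_self _ _⟩
  set m := Fs.max' hne with hm
  have hmlt : m < s := by
    rw [Finset.max'_lt_iff]
    intro b hb
    rcases Finset.mem_insert.1 hb with h | h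
    · rw [h]; exact hs0
    · exact (Finset.mem_filter.1 h).2
  have hm0 : 0 ≤ m := Finset.le_max' _ _ (Finset.mem_insert_self _ _)
  obtain ⟨a, haD, hal, har⟩ := c.denseD (l := max m (s - ε/2))
    (le_trans hm0 (le_max_left _ _)) (by rw [max_lt_iff]; exact ⟨hmlt, by linarith⟩) hs1
  refine ⟨a, haD, le_trans hm0 ((le_max_left _ _).trans hal.le), har, ?_⟩
  have h1 : s - a < ε/2 := by
    have := (le_max_right m (s - ε/2)).trans_lt hal; linarith
  have h2 : c.SI a s < ε/2 := by
    refine hF _ _ (fun d hd hPd => ?_)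
    have hds : (d:ℝ) < s := hPd.2
    have hmem : (d:ℝ) ∈ Fs := by
      rw [hFs]
      refine Finset.mem_insert.2 (Or.inr (Finset.mem_filter.2 ⟨?_, hds⟩))
      exact Finset.mem_image.2 ⟨d, hd, rfl⟩
    have hdm : (d:ℝ) ≤ m := Finset.le_max' Fs _ hmem
    have : (d:ℝ) < a := lt_of_le_of_lt hdm ((le_max_left _ _).trans_lt hal)
    exact absurd hPd.1 (not_lt.2 this.le)
  unfold SI at h2 ⊢
  linarith

lemma dright {s ε : ℝ} (hs0 : 0 ≤ s) (hs1 : s < 1) (hε : 0 < ε) :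
    ∃ b ∈ c.D, s < b ∧ b < 1 ∧ (b - s) + c.SI s b < ε := by
  classical
  obtain ⟨F, hF⟩ := c.tail_small (show 0 < ε/2 by linarith)
  set Fs : Finset ℝ := insert 1 ((F.image (Subtype.val)).filter (s < ·)) with hFs
  have hne : Fs.Nonempty := ⟨1, Finset.mem_insert_self _ _⟩
  set m := Fs.min' hne with hm
  have hsm : s < m := by
    rw [Finset.lt_min'_iff]
    intro b hb
    rcases Finset.mem_insert.1 hb with h | h
    · rw [h]; exact hs1
    · exact (Finset.mem_filter.1 h).2
  have hm1 : m ≤ 1 := Finset.min'_le _ _ (Finset.mem_insert_self _ _)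
  obtain ⟨b, hbD, hbl, hbr⟩ := c.denseD (l := s) hs0
    (lt_min hsm (by linarith)) ((min_le_left m (s + ε/2)).trans hm1)
  have hbm : b < m := lt_of_lt_of_le hbr (min_le_left _ _)
  refine ⟨b, hbD, hbl, lt_of_lt_of_le hbm hm1, ?_⟩
  have h1 : b - s < ε/2 := by
    have := lt_of_lt_of_le hbr (min_le_right _ _); linarith
  have h2 : c.SI s b < ε/2 := by
    refine hF _ _ (fun d hd hPd => ?_)
    have hds : s < (d:ℝ) := hPd.1
    have hmem : (d:ℝ) ∈ Fs := by
      rw [hFs]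
      refine Finset.mem_insert.2 (Or.inr (Finset.mem_filter.2 ⟨?_, hds⟩))
      exact Finset.mem_image.2 ⟨d, hd, rfl⟩
    have hdm : m ≤ (d:ℝ) := Finset.min'_le Fs _ hmem
    exact absurd hPd.2 (not_lt.2 (hbm.le.trans hdm))
  unfold SI at h2 ⊢
  linarith

lemma drightu {s ε : ℝ} (hs0 : 0 ≤ s) (hs1 : s < 1) (hε : 0 < ε) :
    ∃ u, s < u ∧ u < 1 ∧ (u - s) + c.SIc s u < ε := by
  classical
  obtain ⟨F, hF⟩ := c.tail_small (show 0 < ε/2 by linarith)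
  set Fs : Finset ℝ := insert 1 ((F.image (Subtype.val)).filter (s < ·)) with hFs
  have hne : Fs.Nonempty := ⟨1, Finset.mem_insert_self _ _⟩
  set m := Fs.min' hne with hm
  have hsm : s < m := by
    rw [Finset.lt_min'_iff]
    intro b hb
    rcases Finset.mem_insert.1 hb with h | h
    · rw [h]; exact hs1
    · exact (Finset.mem_filter.1 h).2
  have hm1 : m ≤ 1 := Finset.min'_le _ _ (Finset.mem_insert_self _ _)
  set r := min m (s + ε/2) with hr
  have hsr : s < r := lt_min hsm (by linarith)
  set u := (s + r)/2 with hu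
  have hur : u < r := by rw [hu]; linarith
  have hsu : s < u := by rw [hu]; linarith
  refine ⟨u, hsu, ?_, ?_⟩
  · have : r ≤ 1 := (min_le_left _ _).trans hm1
    linarith
  · have h1 : u - s < ε/2 := by
      have : r ≤ s + ε/2 := min_le_right _ _
      linarith
    have h2 : c.SIc s u < ε/2 := by
      refine hF _ _ (fun d hd hPd => ?_)
      have hds : s < (d:ℝ) := hPd.1
      have hmem : (d:ℝ) ∈ Fs := by
        rw [hFs]
        exact Finset.mem_insert.2 (Or.inr
          (Finset.mem_filter.2 ⟨Finset.mem_image.2 ⟨d, hd, rfl⟩, hds⟩))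
      have hdm : m ≤ (d:ℝ) := Finset.min'_le Fs _ hmem
      have : u < (d:ℝ) := lt_of_lt_of_le (hur.trans_le (min_le_left _ _)) hdm
      exact absurd hPd.2 (not_le.2 this)
    unfold SIc at h2 ⊢
    linarith

lemma one_not_mem_D : (1:ℝ) ∉ c.D := fun h => absurd (c.hD h).2 (lt_irrefl 1)

lemma supg {ε : ℝ} (hε : 0 < ε) : ∃ t, 0 ≤ t ∧ t < 1 ∧ c.L - c.g t < ε := by
  obtain ⟨a, haD, ha0, ha1, hsum⟩ := c.dleft one_pos le_rfl hε
  refine ⟨a, ha0, ha1, ?_⟩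
  have h1 : c.S 1 = c.S a + c.SIc a 1 := c.split6 ha1.le
  have h2 : c.SIc a 1 = c.SI a 1 + c.cc 1 := c.splitcc ha1
  have h3 : c.cc 1 = 0 := c.cc_eq_zero (fun h => c.one_not_mem_D h.1)
  have h4 : c.S 1 = c.T := c.S_one
  simp only [L, g]
  linarith

noncomputable def Gaps : Set ℝ := ⋃ d : ↥(c.D \ {0}), Set.Ioo (c.g d - c.cc d) (c.g d)
noncomputable def Xset : Set ℝ := Set.Ico 0 c.L \ c.Gaps

lemma gaps_open : IsOpen c.Gaps := isOpen_iUnion (fun _ => isOpen_Ioo)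

lemma g_notin_gaps {t : ℝ} (ht : t ∈ Set.Ico (0:ℝ) 1) : c.g t ∉ c.Gaps := by
  rw [Gaps, Set.mem_iUnion]
  rintro ⟨d, hd⟩
  rcases le_or_gt (d:ℝ) t with h | h
  · exact absurd hd.2 (not_lt.2 (c.g_mono h))
  · exact absurd hd.1 (not_lt.2 (c.lt_gcc h).le)

lemma g_mem_Xset {t : ℝ} (ht : t ∈ Set.Ico (0:ℝ) 1) : c.g t ∈ c.Xset :=
  ⟨⟨c.g_nonneg ht.1, c.g_lt_L ht.2⟩, c.g_notin_gaps ht⟩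

lemma char {x : ℝ} (hx : x ∈ c.Xset) :
    (∃ s, s ∈ Set.Ico (0:ℝ) 1 ∧ x = c.g s) ∨
    (∃ s, s ∈ c.D \ {0} ∧ x = c.g s - c.cc s) := by
  obtain ⟨⟨hx0, hxL⟩, hgaps⟩ := hx
  set A : Set ℝ := {t : ℝ | t ∈ Set.Ico (0:ℝ) 1 ∧ c.g t ≤ x} with hA
  have h0A : 0 ∈ A := ⟨⟨le_rfl, one_pos⟩, by rw [c.g_zero]; exact hx0⟩
  obtain ⟨t0, ht00, ht01, ht0x⟩ := c.supg (show 0 < c.L - x by linarith)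
  have hgt0 : x < c.g t0 := by linarith
  have hbdd : ∀ t ∈ A, t ≤ t0 := by
    intro t ht
    by_contra hc
    push_neg at hc
    exact absurd ht.2 (not_le.2 (lt_of_lt_of_le hgt0 (c.g_mono hc.le)))
  have hbdd' : BddAbove A := ⟨t0, hbdd⟩
  set s := sSup A with hs
  have hs0 : 0 ≤ s := le_csSup hbdd' h0A
  have hst0 : s ≤ t0 := csSup_le ⟨0, h0A⟩ hbdd
  have hs1 : s < 1 := lt_of_le_of_lt hst0 ht01
  have hdc : ∀ t, 0 ≤ t → t < s → c.g t ≤ x := by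
    intro t ht0' hts
    obtain ⟨t', ht'A, htt'⟩ := exists_lt_of_lt_csSup ⟨0, h0A⟩ hts
    exact le_trans (c.g_mono htt'.le) ht'A.2
  by_cases hgs : c.g s ≤ x
  · left
    refine ⟨s, ⟨hs0, hs1⟩, ?_⟩
    by_contra hne
    have hlt : c.g s < x := lt_of_le_of_ne hgs (fun h => hne h.symm)
    obtain ⟨u, hsu, hu1, husum⟩ := c.drightu hs0 hs1 (show 0 < x - c.g s by linarith)
    have hgu : c.g u ≤ x := by
      have hsplit := c.split6 hsu.le
      simp only [g] at husum ⊢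
      simp only [g] at hlt
      linarith
    have : u ≤ s := le_csSup hbdd' ⟨⟨hs0.trans hsu.le, hu1⟩, hgu⟩
    exact absurd hsu (not_lt.2 this)
  · right
    push_neg at hgs
    have hspos : 0 < s := by
      rcases eq_or_lt_of_le hs0 with h | h
      · exfalso; rw [← h] at hgs; rw [c.g_zero] at hgs; exact absurd hx0 (not_le.2 hgs)
      · exact h
    have hge : c.g s - c.cc s ≤ x := by
      by_contra hc
      push_neg at hc
      obtain ⟨a, haD, ha0, has, hasum⟩ := c.dleft hspos hs1.le
        (show 0 < c.g s - c.cc s - x by linarith)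
      have hglcc := c.glcc has
      have : x < c.g a := by linarith
      exact absurd (hdc a ha0 has) (not_le.2 this)
    have hccpos : 0 < c.cc s := by linarith
    have hsD : s ∈ c.D \ {0} := by
      by_contra hc
      rw [c.cc_eq_zero hc] at hccpos
      exact absurd hccpos (lt_irrefl 0)
    refine ⟨s, hsD, ?_⟩
    have hnotgap : c.g s - c.cc s ∈ Set.Ioo (c.g s - c.cc s) (c.g s) → False := fun h =>
      absurd h.1 (lt_irrefl _)
    have : x ∉ Set.Ioo (c.g s - c.cc s) (c.g s) := by
      intro hmem
      refine hgaps ?_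
      rw [Gaps, Set.mem_iUnion]
      refine ⟨⟨s, hsD⟩, hmem⟩
    rcases eq_or_lt_of_le hge with h | h
    · exact h.symm
    · exact absurd ⟨h, hgs⟩ this

def okp (p : ℝ × ℝ) : Prop := p.1 ∈ c.D ∧ p.2 ∈ c.D ∧ p.1 < p.2

lemma okp_snd {p : ℝ × ℝ} (h : c.okp p) : p.2 ∈ c.D \ {0} := by
  refine ⟨h.2.1, ?_⟩
  have h1 : 0 ≤ p.1 := (c.hD h.1).1
  have : (0:ℝ) < p.2 := lt_of_le_of_lt h1 h.2.2
  exact fun hc => absurd this (by rw [Set.mem_singleton_iff] at hc; rw [hc]; exact lt_irrefl 0)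

lemma okp_fst_nonneg {p : ℝ × ℝ} (h : c.okp p) : 0 ≤ p.1 := (c.hD h.1).1
lemma okp_snd_lt_one {p : ℝ × ℝ} (h : c.okp p) : p.2 < 1 := (c.hD h.2.1).2

lemma memb1 {s : ℝ} {p : ℝ × ℝ} (hs : s ∈ Set.Ico (0:ℝ) 1) (hp : c.okp p) :
    c.g s ∈ Set.Icc (c.g p.1) (c.g p.2 - c.cc p.2) ↔ s ∈ Set.Ico p.1 p.2 := by
  constructor
  · rintro ⟨h1, h2⟩
    constructor
    · by_contra hc
      push_neg at hc
      exact absurd h1 (not_le.2 (c.g_strictMono hc))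
    · by_contra hc
      push_neg at hc
      have : c.g p.2 - c.cc p.2 < c.g s :=
        lt_of_lt_of_le (c.gcc_lt (c.okp_snd hp)) (c.g_mono hc)
      exact absurd h2 (not_le.2 this)
  · rintro ⟨h1, h2⟩
    exact ⟨c.g_mono h1, (c.lt_gcc h2).le⟩

lemma memb2 {s : ℝ} {p : ℝ × ℝ} (hs : s ∈ c.D \ {0}) (hp : c.okp p) :
    c.g s - c.cc s ∈ Set.Icc (c.g p.1) (c.g p.2 - c.cc p.2) ↔ p.1 < s ∧ s ≤ p.2 := by
  have hccs : 0 < c.cc s := c.cc_pos hs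
  constructor
  · rintro ⟨h1, h2⟩
    constructor
    · by_contra hc
      push_neg at hc
      have : c.g s ≤ c.g p.1 := c.g_mono hc
      linarith
    · by_contra hc
      push_neg at hc
      have h3 : c.g p.2 < c.g s - c.cc s := c.lt_gcc hc
      have h4 : c.g p.2 - c.cc p.2 < c.g p.2 := c.gcc_lt (c.okp_snd hp)
      linarith
  · rintro ⟨h1, h2⟩
    refine ⟨(c.lt_gcc h1).le, ?_⟩
    rcases eq_or_lt_of_le h2 with h | h
    · rw [h]
    · have h3 : c.g s < c.g p.2 - c.cc p.2 := c.lt_gcc h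
      linarith

noncomputable def Bset (a b : ℝ) : Set ↥c.Xset :=
  Subtype.val ⁻¹' (Set.Icc (c.g a) (c.g b - c.cc b))

lemma mem_Bset {a b : ℝ} {x : ↥c.Xset} :
    x ∈ c.Bset a b ↔ (x:ℝ) ∈ Set.Icc (c.g a) (c.g b - c.cc b) := Iff.rfl

lemma notin_gap {x : ℝ} (hx : x ∈ c.Xset) {r : ℝ} (hr : r ∈ c.D \ {0}) :
    x ∉ Set.Ioo (c.g r - c.cc r) (c.g r) := by
  intro hmem
  refine hx.2 ?_
  rw [Gaps, Set.mem_iUnion]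
  exact ⟨⟨r, hr⟩, hmem⟩

lemma Bset_open {p : ℝ × ℝ} (hp : c.okp p) : IsOpen (c.Bset p.1 p.2) := by
  classical
  set la : ℝ := if p.1 = 0 then (-1:ℝ) else c.g p.1 - c.cc p.1 with hla
  have : c.Bset p.1 p.2 = Subtype.val ⁻¹' (Set.Ioo la (c.g p.2)) := by
    ext x
    obtain ⟨⟨hx0, hxL⟩, hgaps⟩ := x.2
    simp only [Bset, Set.mem_preimage, Set.mem_Icc, Set.mem_Ioo]
    constructor
    · rintro ⟨h1, h2⟩
      refine ⟨?_, lt_of_le_of_lt h2 (c.gcc_lt (c.okp_snd hp))⟩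
      rw [hla]
      split
      · rename_i h0
        have : c.g p.1 = 0 := by rw [h0, c.g_zero]
        linarith
      · rename_i h0
        have hp1 : p.1 ∈ c.D \ {0} := ⟨hp.1, h0⟩
        have := c.gcc_lt hp1
        linarith
    · rintro ⟨h1, h2⟩
      have hnot2 := c.notin_gap ⟨⟨hx0, hxL⟩, hgaps⟩ (c.okp_snd hp)
      rw [Set.mem_Ioo] at hnot2
      push_neg at hnot2
      refine ⟨?_, ?_⟩
      · rw [hla] at h1
        by_cases h0 : p.1 = 0
        · rw [h0, c.g_zero]; exact hx0
        · have hp1 : p.1 ∈ c.D \ {0} := ⟨hp.1, h0⟩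
          have hnot1 := c.notin_gap ⟨⟨hx0, hxL⟩, hgaps⟩ hp1
          rw [Set.mem_Ioo] at hnot1
          push_neg at hnot1
          rw [if_neg h0] at h1
          exact hnot1 h1
      · by_contra hc
        push_neg at hc
        exact absurd h2 (not_lt.2 (hnot2 hc))
  rw [this]
  exact (isOpen_Ioo).preimage continuous_subtype_val

lemma val_Bset (a b : ℝ) :
    Subtype.val '' (c.Bset a b) = c.Xset ∩ Set.Icc (c.g a) (c.g b - c.cc b) :=
  Subtype.image_preimage_coe _ _

lemma Xset_inter_Icc_closed {u v : ℝ} (hv : v < c.L) :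
    IsClosed (c.Xset ∩ Set.Icc u v) := by
  have : c.Xset ∩ Set.Icc u v = (Set.Ici 0 ∩ c.Gapsᶜ) ∩ Set.Icc u v := by
    ext x
    simp only [Xset, Set.mem_inter_iff, Set.mem_diff, Set.mem_Ico, Set.mem_Ici,
      Set.mem_compl_iff, Set.mem_Icc]
    constructor
    · rintro ⟨⟨⟨h1, h2⟩, h3⟩, h4⟩
      exact ⟨⟨h1, h3⟩, h4⟩
    · rintro ⟨⟨h1, h3⟩, h4⟩
      exact ⟨⟨⟨h1, lt_of_le_of_lt h4.2 hv⟩, h3⟩, h4⟩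
  rw [this]
  exact ((isClosed_Ici.inter c.gaps_open.isClosed_compl).inter isClosed_Icc)

lemma Bset_compact {p : ℝ × ℝ} (hp : c.okp p) : IsCompact (c.Bset p.1 p.2) := by
  rw [Topology.IsEmbedding.subtypeVal.isCompact_iff, c.val_Bset]
  have hv : c.g p.2 - c.cc p.2 < c.L := by
    have h1 := c.g_lt_L (c.okp_snd_lt_one hp)
    have h2 := c.cc_nonneg p.2
    linarith
  refine IsCompact.of_isClosed_subset (isCompact_Icc (a := c.g p.1) (b := c.g p.2 - c.cc p.2))
    (c.Xset_inter_Icc_closed hv) Set.inter_subset_right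

def BB : Set (Set ↥c.Xset) := {U | ∃ p : ℝ × ℝ, c.okp p ∧ U = c.Bset p.1 p.2}

lemma BB_countable : c.BB.Countable := by
  have h1 : c.BB ⊆ (fun p : ℝ × ℝ => c.Bset p.1 p.2) '' {p | c.okp p} := by
    rintro U ⟨p, hp, rfl⟩
    exact ⟨p, hp, rfl⟩
  have h2 : ({p | c.okp p} : Set (ℝ × ℝ)).Countable := by
    refine Set.Countable.mono ?_ (c.hcountD.prod c.hcountD)
    rintro p ⟨h1', h2', _⟩
    exact ⟨h1', h2'⟩
  exact Set.Countable.mono h1 (h2.image _)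

lemma exists_basic {x : ↥c.Xset} {ε : ℝ} (hε : 0 < ε) :
    ∃ p : ℝ × ℝ, c.okp p ∧ c.g p.1 ≤ (x:ℝ) ∧ (x:ℝ) - ε < c.g p.1 ∧
      (x:ℝ) ≤ c.g p.2 - c.cc p.2 ∧ c.g p.2 - c.cc p.2 < (x:ℝ) + ε := by
  rcases c.char x.2 with ⟨s, hs, hxg⟩ | ⟨s, hs, hxg⟩
  · -- x = g s
    have hb : ∃ b ∈ c.D, s < b ∧ c.g s ≤ c.g b - c.cc b ∧ c.g b - c.cc b < c.g s + ε := by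
      obtain ⟨b, hbD, hsb, hb1, hsum⟩ := c.dright hs.1 hs.2 hε
      have := c.glcc hsb
      exact ⟨b, hbD, hsb, (c.lt_gcc hsb).le, by linarith⟩
    obtain ⟨b, hbD, hsb, hxb1, hxb2⟩ := hb
    have ha : ∃ a ∈ c.D, a ≤ s ∧ c.g s - ε < c.g a ∧ c.g a ≤ c.g s := by
      by_cases hsD : s ∈ c.D
      · exact ⟨s, hsD, le_rfl, by linarith, le_rfl⟩
      · have hs0 : 0 < s := by
          rcases eq_or_lt_of_le hs.1 with h | h
          · exact absurd (h ▸ c.zero_mem_D) hsD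
          · exact h
        obtain ⟨a, haD, ha0, has, hsum⟩ := c.dleft hs0 hs.2.le hε
        have h1 := c.split6 has.le
        have h2 := c.splitcc has
        have h3 : c.cc s = 0 := c.cc_eq_zero (fun h => hsD h.1)
        refine ⟨a, haD, has.le, ?_, c.g_mono has.le⟩
        simp only [g]
        linarith
    obtain ⟨a, haD, has, hxa1, hxa2⟩ := ha
    exact ⟨(a, b), ⟨haD, hbD, lt_of_le_of_lt has hsb⟩, by rw [hxg]; exact hxa2,
      by rw [hxg]; linarith, by rw [hxg]; exact hxb1, by rw [hxg]; linarith⟩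
  · -- x = g s - cc s, s ∈ D \ {0}
    have hs0 : 0 < s := by
      have := c.hD hs.1
      rcases eq_or_lt_of_le this.1 with h | h
      · exact absurd h.symm hs.2
      · exact h
    have hs1 : s < 1 := (c.hD hs.1).2
    obtain ⟨a, haD, ha0, has, hsum⟩ := c.dleft hs0 hs1.le hε
    have hglcc := c.glcc has
    have hSIn := c.SI_nonneg a s
    exact ⟨(a, s), ⟨haD, hs.1, has⟩,
      by show c.g a ≤ (x:ℝ); rw [hxg]; linarith,
      by show (x:ℝ) - ε < c.g a; rw [hxg]; linarith,
      by show (x:ℝ) ≤ c.g s - c.cc s; rw [hxg],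
      by show c.g s - c.cc s < (x:ℝ) + ε; rw [hxg]; linarith⟩

lemma isBasis : TopologicalSpace.IsTopologicalBasis c.BB := by
  refine TopologicalSpace.isTopologicalBasis_of_isOpen_of_nhds ?_ ?_
  · rintro U ⟨p, hp, rfl⟩
    exact c.Bset_open hp
  · intro x U hxU hU
    rw [isOpen_induced_iff] at hU
    obtain ⟨O, hO, rfl⟩ := hU
    rw [Metric.isOpen_iff] at hO
    obtain ⟨ε, hε, hball⟩ := hO (x:ℝ) hxU
    obtain ⟨p, hp, h1, h2, h3, h4⟩ := c.exists_basic (x := x) hε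
    refine ⟨c.Bset p.1 p.2, ⟨p, hp, rfl⟩, ⟨h1, h3⟩, ?_⟩
    intro y hy
    rw [Set.mem_preimage]
    refine hball ?_
    rw [Real.ball_eq_Ioo]
    rcases hy with ⟨hy1, hy2⟩
    exact ⟨by linarith, by linarith⟩

lemma locallyCompact : LocallyCompactSpace ↥c.Xset := by
  refine ⟨fun x n hn => ?_⟩
  rw [c.isBasis.mem_nhds_iff] at hn
  obtain ⟨V, ⟨p, hp, rfl⟩, hxV, hVn⟩ := hn
  exact ⟨_, (c.Bset_open hp).mem_nhds hxV, hVn, c.Bset_compact hp⟩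

lemma noncompact : NoncompactSpace ↥c.Xset := by
  refine ⟨fun hcomp => ?_⟩
  have hXc : IsCompact c.Xset := isCompact_iff_isCompact_univ.2 hcomp
  have hclosed : IsClosed c.Xset := hXc.isClosed
  have hLmem : c.L ∈ closure c.Xset := by
    rw [Metric.mem_closure_iff]
    intro ε hε
    obtain ⟨t, ht0, ht1, htL⟩ := c.supg hε
    refine ⟨c.g t, c.g_mem_Xset ⟨ht0, ht1⟩, ?_⟩
    rw [Real.dist_eq, abs_sub_lt_iff]
    have := c.g_lt_L ht1
    constructor <;> linarith
  rw [hclosed.closure_eq] at hLmem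
  exact absurd hLmem.1.2 (lt_irrefl _)

lemma Xset_measurable : MeasurableSet c.Xset :=
  (measurableSet_Ico).diff c.gaps_open.measurableSet

lemma g_measurable : Measurable c.g := c.g_mono.measurable

noncomputable def nu : Measure ℝ := (volume.restrict (Set.Ico (0:ℝ) 1)).map c.g
noncomputable def mu : Measure ↥c.Xset := c.nu.comap Subtype.val

lemma me : MeasurableEmbedding (Subtype.val : ↥c.Xset → ℝ) :=
  MeasurableEmbedding.subtype_coe c.Xset_measurable

lemma nu_apply {A : Set ℝ} (hA : MeasurableSet A) :
    c.nu A = volume (c.g ⁻¹' A ∩ Set.Ico (0:ℝ) 1) := by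
  rw [nu, Measure.map_apply c.g_measurable hA,
    Measure.restrict_apply (c.g_measurable hA)]

lemma mu_apply (s : Set ↥c.Xset) : c.mu s = c.nu (Subtype.val '' s) :=
  c.me.comap_apply _ _

lemma preimage_Icc {p : ℝ × ℝ} (hp : c.okp p) :
    c.g ⁻¹' (c.Xset ∩ Set.Icc (c.g p.1) (c.g p.2 - c.cc p.2)) ∩ Set.Ico (0:ℝ) 1
      = Set.Ico p.1 p.2 := by
  ext t
  simp only [Set.mem_inter_iff, Set.mem_preimage, Set.mem_Icc, Set.mem_Ico]
  constructor
  · rintro ⟨⟨hXs, h1, h2⟩, ht0, ht1⟩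
    constructor
    · by_contra hc
      push_neg at hc
      exact absurd h1 (not_le.2 (c.g_strictMono hc))
    · by_contra hc
      push_neg at hc
      have : c.g p.2 - c.cc p.2 < c.g t :=
        lt_of_lt_of_le (c.gcc_lt (c.okp_snd hp)) (c.g_mono hc)
      exact absurd h2 (not_le.2 this)
  · rintro ⟨h1, h2⟩
    have ht : t ∈ Set.Ico (0:ℝ) 1 :=
      ⟨(c.okp_fst_nonneg hp).trans h1, lt_trans h2 (c.okp_snd_lt_one hp)⟩
    exact ⟨⟨c.g_mem_Xset ht, c.g_mono h1, (c.lt_gcc h2).le⟩, ⟨ht.1, ht.2⟩⟩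

lemma mu_Bset {p : ℝ × ℝ} (hp : c.okp p) :
    c.mu (c.Bset p.1 p.2) = ENNReal.ofReal (p.2 - p.1) := by
  rw [c.mu_apply, c.val_Bset,
    c.nu_apply (c.Xset_measurable.inter measurableSet_Icc), c.preimage_Icc hp,
    Real.volume_Ico]

def IcoU (l : List (ℝ × ℝ)) : Set ℝ := ⋃ p ∈ l, Set.Ico p.1 p.2

noncomputable def BUn (l : List (ℝ × ℝ)) : Set ↥c.Xset := ⋃ p ∈ l, c.Bset p.1 p.2

lemma mu_BUn {l : List (ℝ × ℝ)} (hl : ∀ p ∈ l, c.okp p) :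
    c.mu (c.BUn l) = volume (IcoU l) := by
  rw [c.mu_apply]
  have himg : Subtype.val '' (c.BUn l)
      = ⋃ p ∈ l, (c.Xset ∩ Set.Icc (c.g p.1) (c.g p.2 - c.cc p.2)) := by
    rw [BUn, Set.image_iUnion₂]
    refine Set.iUnion₂_congr fun p hp => c.val_Bset p.1 p.2
  rw [himg]
  have hmeas : MeasurableSet (⋃ p ∈ l, (c.Xset ∩ Set.Icc (c.g p.1) (c.g p.2 - c.cc p.2))) := by
    refine MeasurableSet.biUnion (l.finite_toSet.countable) (fun p _ => ?_)
    exact c.Xset_measurable.inter measurableSet_Icc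
  rw [c.nu_apply hmeas]
  have hpre : c.g ⁻¹' (⋃ p ∈ l, (c.Xset ∩ Set.Icc (c.g p.1) (c.g p.2 - c.cc p.2)))
      ∩ Set.Ico (0:ℝ) 1 = IcoU l := by
    rw [Set.preimage_iUnion₂, Set.iUnion₂_inter]
    exact Set.iUnion₂_congr fun p hp => c.preimage_Icc (hl p hp)
  rw [hpre]

lemma mu_prob : IsProbabilityMeasure c.mu := by
  constructor
  rw [c.mu_apply]
  have : Subtype.val '' (Set.univ : Set ↥c.Xset) = c.Xset := Subtype.coe_image_univ _
  rw [this, c.nu_apply c.Xset_measurable]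
  have : c.g ⁻¹' c.Xset ∩ Set.Ico (0:ℝ) 1 = Set.Ico (0:ℝ) 1 := by
    refine Set.inter_eq_right.2 (fun t ht => c.g_mem_Xset ht)
  rw [this, Real.volume_Ico]
  norm_num

lemma mu_nonatomic (x : ↥c.Xset) : c.mu {x} = 0 := by
  rw [c.mu_apply, Set.image_singleton, c.nu_apply (measurableSet_singleton _)]
  refine le_antisymm ?_ zero_le
  refine le_trans (measure_mono (Set.inter_subset_left)) (le_of_eq ?_)
  have hsub : (c.g ⁻¹' {(x:ℝ)}).Subsingleton := by
    intro a ha b hb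
    exact c.g_strictMono.injective (ha.trans hb.symm)
  exact hsub.measure_zero _

def Sep (p q : ℝ × ℝ) : Prop := p.2 < q.1 ∨ q.2 < p.1

lemma IcoU_nil : IcoU [] = ∅ := by simp [IcoU]

lemma IcoU_cons (p : ℝ × ℝ) (l : List (ℝ × ℝ)) :
    IcoU (p :: l) = Set.Ico p.1 p.2 ∪ IcoU l := by
  simp [IcoU]

lemma mem_IcoU {x : ℝ} {l : List (ℝ × ℝ)} :
    x ∈ IcoU l ↔ ∃ p ∈ l, x ∈ Set.Ico p.1 p.2 := by
  rw [IcoU]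
  constructor
  · intro hx
    rcases Set.mem_iUnion₂.1 hx with ⟨p, hp, h⟩
    exact ⟨p, hp, h⟩
  · rintro ⟨p, hp, h⟩
    exact Set.mem_iUnion₂.2 ⟨p, hp, h⟩

lemma IcoU_perm {l l' : List (ℝ × ℝ)} (h : l.Perm l') : IcoU l = IcoU l' := by
  ext x
  rw [mem_IcoU, mem_IcoU]
  constructor <;> rintro ⟨p, hp, hx⟩
  · exact ⟨p, h.mem_iff.1 hp, hx⟩
  · exact ⟨p, h.mem_iff.2 hp, hx⟩

lemma IcoU_measurable (l : List (ℝ × ℝ)) : MeasurableSet (IcoU l) :=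
  MeasurableSet.biUnion (l.finite_toSet.countable) (fun _ _ => measurableSet_Ico)

lemma merge_union {p q : ℝ × ℝ} (h : ¬ Sep p q) :
    Set.Ico p.1 p.2 ∪ Set.Ico q.1 q.2 = Set.Ico (min p.1 q.1) (max p.2 q.2) := by
  rw [Sep] at h
  push_neg at h
  exact Set.Ico_union_Ico' h.1 h.2

lemma sep_disjoint {p q : ℝ × ℝ} (h : Sep p q) :
    Disjoint (Set.Ico p.1 p.2) (Set.Ico q.1 q.2) := by
  rw [Set.Ico_disjoint_Ico]
  rcases h with h | h
  · exact le_trans (min_le_left _ _) (le_trans h.le (le_max_right _ _))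
  · exact le_trans (min_le_right _ _) (le_trans h.le (le_max_left _ _))

lemma disjoint_head {p : ℝ × ℝ} {l : List (ℝ × ℝ)} (h : ∀ q ∈ l, Sep p q) :
    Disjoint (Set.Ico p.1 p.2) (IcoU l) := by
  rw [IcoU, Set.disjoint_iUnion₂_right]
  exact fun q hq => sep_disjoint (h q hq)

lemma pairwise_or_merge (l : List (ℝ × ℝ)) :
    l.Pairwise Sep ∨ ∃ p q t, l.Perm (p :: q :: t) ∧ ¬ Sep p q := by
  induction l with
  | nil => exact Or.inl List.Pairwise.nil
  | cons p t ih =>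
    rcases ih with hpw | ⟨q, r, t', hperm, hqr⟩
    · by_cases hall : ∀ q ∈ t, Sep p q
      · exact Or.inl (List.Pairwise.cons hall hpw)
      · push_neg at hall
        obtain ⟨q, hq, hnsep⟩ := hall
        obtain ⟨s1, s2, rfl⟩ := List.append_of_mem hq
        refine Or.inr ⟨p, q, s1 ++ s2, ?_, hnsep⟩
        exact List.Perm.cons p List.perm_middle
    · refine Or.inr ⟨q, r, p :: t', ?_, hqr⟩
      have h1 : (p :: t).Perm (p :: q :: r :: t') := hperm.cons p
      have h2 : (p :: q :: r :: t').Perm (q :: p :: r :: t') := List.Perm.swap q p _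
      have h3 : (q :: p :: r :: t').Perm (q :: r :: p :: t') := (List.Perm.swap r p _).cons q
      exact h1.trans (h2.trans h3)

lemma min_mem_D {a b : ℝ} (ha : a ∈ c.D) (hb : b ∈ c.D) : min a b ∈ c.D := by
  rcases le_total a b with h | h
  · rwa [min_eq_left h]
  · rwa [min_eq_right h]

lemma max_mem_D {a b : ℝ} (ha : a ∈ c.D) (hb : b ∈ c.D) : max a b ∈ c.D := by
  rcases le_total a b with h | h
  · rwa [max_eq_right h]
  · rwa [max_eq_left h]

lemma sep_norm : ∀ (n : ℕ) (l : List (ℝ × ℝ)), l.length = n → (∀ p ∈ l, c.okp p) →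
    ∃ l', (∀ p ∈ l', c.okp p) ∧ l'.Pairwise Sep ∧ IcoU l' = IcoU l := by
  intro n
  induction n using Nat.strong_induction_on with
  | _ n ih =>
    intro l hlen hok
    rcases pairwise_or_merge l with hpw | ⟨p, q, t, hperm, hnsep⟩
    · exact ⟨l, hok, hpw, rfl⟩
    · have hpmem : p ∈ l := hperm.mem_iff.2 (by simp)
      have hqmem : q ∈ l := hperm.mem_iff.2 (by simp)
      have hpok := hok p hpmem
      have hqok := hok q hqmem
      set m : ℝ × ℝ := (min p.1 q.1, max p.2 q.2) with hm
      have hmok : c.okp m := by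
        refine ⟨c.min_mem_D hpok.1 hqok.1, c.max_mem_D hpok.2.1 hqok.2.1, ?_⟩
        exact lt_of_le_of_lt (min_le_left _ _) (lt_of_lt_of_le hpok.2.2 (le_max_left _ _))
      have hlen2 : (m :: t).length < n := by
        have := hperm.length_eq
        simp at this
        simp [← hlen, this]
      have hok2 : ∀ r ∈ m :: t, c.okp r := by
        intro r hr
        rcases List.mem_cons.1 hr with h | h
        · rw [h]; exact hmok
        · exact hok r (hperm.mem_iff.2 (by simp [h]))
      obtain ⟨l', h1, h2, h3⟩ := ih _ hlen2 (m :: t) rfl hok2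
      refine ⟨l', h1, h2, ?_⟩
      rw [h3, IcoU_perm hperm, IcoU_cons, IcoU_cons, IcoU_cons, ← Set.union_assoc,
        merge_union hnsep]

lemma vol_IcoU_pairwise : ∀ (l : List (ℝ × ℝ)), l.Pairwise Sep →
    volume (IcoU l) = (l.map (fun p => ENNReal.ofReal (p.2 - p.1))).sum := by
  intro l hpw
  induction l with
  | nil => simp [IcoU_nil]
  | cons p t ih =>
    rw [List.pairwise_cons] at hpw
    rw [IcoU_cons, measure_union (disjoint_head hpw.1) (IcoU_measurable t),
      Real.volume_Ico, List.map_cons, List.sum_cons, ih hpw.2]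

lemma vol_IcoU_ne_top {l : List (ℝ × ℝ)} (hok : ∀ p ∈ l, c.okp p) :
    volume (IcoU l) ≠ ⊤ := by
  have hsub : IcoU l ⊆ Set.Ico (0:ℝ) 1 := by
    intro x hx
    obtain ⟨p, hp, hxp⟩ := mem_IcoU.1 hx
    have h1 := c.okp_fst_nonneg (hok p hp)
    have h2 := c.okp_snd_lt_one (hok p hp)
    exact ⟨le_trans h1 hxp.1, lt_trans hxp.2 h2⟩
  refine ne_top_of_le_ne_top ?_ (measure_mono hsub)
  rw [Real.volume_Ico]
  exact ENNReal.ofReal_ne_top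

lemma toReal_vol_IcoU {l : List (ℝ × ℝ)} (hok : ∀ p ∈ l, c.okp p)
    (hpw : l.Pairwise Sep) :
    (volume (IcoU l)).toReal = (l.map (fun p => p.2 - p.1)).sum := by
  induction l with
  | nil => simp [IcoU_nil]
  | cons p t ih =>
    rw [List.pairwise_cons] at hpw
    have hokt : ∀ q ∈ t, c.okp q := fun q hq => hok q (List.mem_cons_of_mem p hq)
    rw [IcoU_cons, measure_union (disjoint_head hpw.1) (IcoU_measurable t),
      Real.volume_Ico, ENNReal.toReal_add ENNReal.ofReal_ne_top (c.vol_IcoU_ne_top hokt),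
      ENNReal.toReal_ofReal (by linarith [(hok p (List.mem_cons_self)).2.2]),
      List.map_cons, List.sum_cons, ih hokt hpw.2]

lemma mem_G_of_mem_D {a : ℝ} (ha : a ∈ c.D) : a ∈ c.G := ((c.mem_D_iff).1 ha).1

lemma sum_mem_G {l : List (ℝ × ℝ)} (hok : ∀ p ∈ l, c.okp p) :
    (l.map (fun p => p.2 - p.1)).sum ∈ c.G := by
  induction l with
  | nil => simp
  | cons p t ih =>
    rw [List.map_cons, List.sum_cons]
    refine add_mem (sub_mem ?_ ?_) (ih (fun q hq => hok q (List.mem_cons_of_mem p hq)))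
    · exact c.mem_G_of_mem_D (hok p (List.mem_cons_self)).2.1
    · exact c.mem_G_of_mem_D (hok p (List.mem_cons_self)).1

lemma foldr_facts : ∀ (l : List (ℝ × ℝ)) (a s : ℝ), a < s →
    a ≤ l.foldr (fun q m => if q.2 < s then max q.2 m else m) a ∧
    l.foldr (fun q m => if q.2 < s then max q.2 m else m) a < s ∧
    ∀ q ∈ l, q.2 < s → q.2 ≤ l.foldr (fun q m => if q.2 < s then max q.2 m else m) a := by
  intro l a s has
  induction l with
  | nil => exact ⟨le_rfl, has, by simp⟩
  | cons p t ih =>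
    obtain ⟨h1, h2, h3⟩ := ih
    simp only [List.foldr_cons]
    by_cases hp : p.2 < s
    · rw [if_pos hp]
      refine ⟨h1.trans (le_max_right _ _), max_lt hp h2, ?_⟩
      intro q hq hqs
      rcases List.mem_cons.1 hq with h | h
      · rw [h]; exact le_max_left _ _
      · exact (h3 q h hqs).trans (le_max_right _ _)
    · rw [if_neg hp]
      refine ⟨h1, h2, ?_⟩
      intro q hq hqs
      rcases List.mem_cons.1 hq with h | h
      · rw [h] at hqs; exact absurd hqs hp
      · exact h3 q h hqs

lemma pigeon {l : List (ℝ × ℝ)} {a s : ℝ} (has : a < s)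
    (hsub : Set.Ioo a s ⊆ IcoU l) : ∃ q ∈ l, q.1 < s ∧ s ≤ q.2 := by
  obtain ⟨h1, h2, h3⟩ := foldr_facts l a s has
  set β := l.foldr (fun q m => if q.2 < s then max q.2 m else m) a with hβ
  set t0 := (β + s)/2 with ht0
  have hβt0 : β < t0 := by rw [ht0]; linarith
  have ht0s : t0 < s := by rw [ht0]; linarith
  have ht0mem : t0 ∈ Set.Ioo a s := ⟨lt_of_le_of_lt h1 hβt0, ht0s⟩
  obtain ⟨q, hq, hqt⟩ := mem_IcoU.1 (hsub ht0mem)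
  refine ⟨q, hq, lt_of_le_of_lt hqt.1 ht0s, ?_⟩
  by_contra hc
  push_neg at hc
  exact absurd hqt.2 (not_lt.2 ((h3 q hq hc).trans hβt0.le))

lemma good_Ico : ∀ (l : List (ℝ × ℝ)), l.Pairwise Sep → (∀ p ∈ l, c.okp p) →
    ∀ s : ℝ, s ∈ c.G → 0 ≤ s → s ≤ (volume (IcoU l)).toReal →
    ∃ l'', (∀ p ∈ l'', c.okp p) ∧ IcoU l'' ⊆ IcoU l ∧
      volume (IcoU l'') = ENNReal.ofReal s := by
  intro l
  induction l with
  | nil =>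
    intro _ _ s hsG hs0 hsle
    rw [IcoU_nil] at hsle
    simp at hsle
    have : s = 0 := le_antisymm hsle hs0
    refine ⟨[], by simp, subset_rfl, ?_⟩
    rw [IcoU_nil, this]; simp
  | cons p t ih =>
    intro hpw hok s hsG hs0 hsle
    rw [List.pairwise_cons] at hpw
    have hokp := hok p (List.mem_cons_self)
    have hokt : ∀ q ∈ t, c.okp q := fun q hq => hok q (List.mem_cons_of_mem p hq)
    have hlp : 0 < p.2 - p.1 := by linarith [hokp.2.2]
    have hvol : volume (IcoU (p :: t)) = ENNReal.ofReal (p.2 - p.1) + volume (IcoU t) := by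
      rw [IcoU_cons, measure_union (disjoint_head hpw.1) (IcoU_measurable t), Real.volume_Ico]
    have htReal : (volume (IcoU (p :: t))).toReal = (p.2 - p.1) + (volume (IcoU t)).toReal := by
      rw [hvol, ENNReal.toReal_add ENNReal.ofReal_ne_top (c.vol_IcoU_ne_top hokt),
        ENNReal.toReal_ofReal hlp.le]
    rcases le_or_gt s (p.2 - p.1) with hcase | hcase
    · rcases eq_or_lt_of_le hs0 with h0 | h0
      · refine ⟨[], by simp, ?_, ?_⟩
        · rw [IcoU_nil]; exact Set.empty_subset _
        · rw [IcoU_nil, ← h0]; simp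
      · refine ⟨[(p.1, p.1 + s)], ?_, ?_, ?_⟩
        · rintro q hq
          rw [List.mem_singleton] at hq
          subst hq
          have h2D : p.1 + s ∈ c.D := by
            rw [c.mem_D_iff]
            refine ⟨add_mem (c.mem_G_of_mem_D hokp.1) hsG, ?_, ?_⟩
            · have := c.okp_fst_nonneg hokp; linarith
            · have := c.okp_snd_lt_one hokp; linarith
          exact ⟨hokp.1, h2D, by show p.1 < p.1 + s; linarith⟩
        · rw [IcoU_cons, IcoU_nil, Set.union_empty, IcoU_cons]
          refine Set.subset_union_of_subset_left ?_ _
          exact Set.Ico_subset_Ico_right (by show p.1 + s ≤ p.2; linarith)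
        · rw [IcoU_cons, IcoU_nil, Set.union_empty, Real.volume_Ico]
          show ENNReal.ofReal (p.1 + s - p.1) = ENNReal.ofReal s
          congr 1
          ring
    · have hsG' : s - (p.2 - p.1) ∈ c.G :=
        sub_mem hsG (sub_mem (c.mem_G_of_mem_D hokp.2.1) (c.mem_G_of_mem_D hokp.1))
      obtain ⟨t'', ht1, ht2, ht3⟩ := ih hpw.2 hokt (s - (p.2 - p.1)) hsG'
        (by linarith) (by rw [htReal] at hsle; linarith)
      refine ⟨p :: t'', ?_, ?_, ?_⟩
      · intro q hq
        rcases List.mem_cons.1 hq with h | h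
        · rw [h]; exact hokp
        · exact ht1 q h
      · rw [IcoU_cons, IcoU_cons]
        exact Set.union_subset_union_right _ ht2
      · rw [IcoU_cons, measure_union ((disjoint_head hpw.1).mono_right ht2)
          (IcoU_measurable t''), Real.volume_Ico, ht3,
          ← ENNReal.ofReal_add hlp.le (by linarith)]
        congr 1
        ring

lemma cover {K : Set ↥c.Xset} (hK : IsCompact K) (hKo : IsOpen K) :
    ∃ l : List (ℝ × ℝ), (∀ p ∈ l, c.okp p) ∧ K = c.BUn l := by
  have hx : ∀ x : ↥c.Xset, x ∈ K →
      ∃ p : ℝ × ℝ, c.okp p ∧ x ∈ c.Bset p.1 p.2 ∧ c.Bset p.1 p.2 ⊆ K := by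
    intro x hxK
    obtain ⟨V, ⟨p, hp, rfl⟩, hxV, hVK⟩ := c.isBasis.exists_subset_of_mem_open hxK hKo
    exact ⟨p, hp, hxV, hVK⟩
  choose f hf1 hf2 hf3 using hx
  obtain ⟨t, ht⟩ := hK.elim_nhds_subcover' (fun x hx => c.Bset (f x hx).1 (f x hx).2)
    (fun x hx => (c.Bset_open (hf1 x hx)).mem_nhds (hf2 x hx))
  refine ⟨t.toList.map (fun x => f x.1 x.2), ?_, ?_⟩
  · intro p hp
    rw [List.mem_map] at hp
    obtain ⟨x, _, rfl⟩ := hp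
    exact hf1 x.1 x.2
  · apply Set.Subset.antisymm
    · intro x hxK
      have := ht hxK
      rw [Set.mem_iUnion₂] at this
      obtain ⟨y, hy, hxy⟩ := this
      rw [BUn, Set.mem_iUnion₂]
      refine ⟨f y.1 y.2, ?_, hxy⟩
      rw [List.mem_map]
      exact ⟨y, by simp [hy], rfl⟩
    · intro x hx
      rw [BUn, Set.mem_iUnion₂] at hx
      obtain ⟨p, hp, hxp⟩ := hx
      rw [List.mem_map] at hp
      obtain ⟨y, _, rfl⟩ := hp
      exact hf3 y.1 y.2 hxp

lemma BUn_subset {l l' : List (ℝ × ℝ)} (hok : ∀ p ∈ l, c.okp p)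
    (hok' : ∀ p ∈ l', c.okp p) (h : IcoU l ⊆ IcoU l') : c.BUn l ⊆ c.BUn l' := by
  intro x hx
  rw [BUn, Set.mem_iUnion₂] at hx
  obtain ⟨p, hpl, hxB⟩ := hx
  rw [c.mem_Bset] at hxB
  rcases c.char x.2 with ⟨s, hs, hxg⟩ | ⟨s, hs, hxg⟩
  · rw [hxg] at hxB
    have hsIco : s ∈ Set.Ico p.1 p.2 := (c.memb1 hs (hok p hpl)).1 hxB
    have : s ∈ IcoU l' := h (mem_IcoU.2 ⟨p, hpl, hsIco⟩)
    obtain ⟨q, hql, hsq⟩ := mem_IcoU.1 this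
    rw [BUn, Set.mem_iUnion₂]
    refine ⟨q, hql, ?_⟩
    rw [c.mem_Bset, hxg]
    exact (c.memb1 hs (hok' q hql)).2 hsq
  · rw [hxg] at hxB
    have hmem2 : p.1 < s ∧ s ≤ p.2 := (c.memb2 hs (hok p hpl)).1 hxB
    have hIoo : Set.Ioo p.1 s ⊆ IcoU l' := by
      intro y hy
      refine h (mem_IcoU.2 ⟨p, hpl, hy.1.le, lt_of_lt_of_le hy.2 hmem2.2⟩)
    obtain ⟨q, hql, hq1, hq2⟩ := pigeon hmem2.1 hIoo
    rw [BUn, Set.mem_iUnion₂]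
    refine ⟨q, hql, ?_⟩
    rw [c.mem_Bset, hxg]
    exact (c.memb2 hs (hok' q hql)).2 ⟨hq1, hq2⟩

lemma mem_BUn {x : ↥c.Xset} {l : List (ℝ × ℝ)} :
    x ∈ c.BUn l ↔ ∃ p ∈ l, x ∈ c.Bset p.1 p.2 := by
  rw [BUn]
  constructor
  · intro hx
    rcases Set.mem_iUnion₂.1 hx with ⟨p, hp, h⟩
    exact ⟨p, hp, h⟩
  · rintro ⟨p, hp, h⟩
    exact Set.mem_iUnion₂.2 ⟨p, hp, h⟩

lemma BUn_nil : c.BUn [] = ∅ := by simp [BUn]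

lemma BUn_cons (p : ℝ × ℝ) (l : List (ℝ × ℝ)) :
    c.BUn (p :: l) = c.Bset p.1 p.2 ∪ c.BUn l := by
  ext x
  rw [c.mem_BUn, Set.mem_union, c.mem_BUn]
  constructor
  · rintro ⟨q, hq, h⟩
    rcases List.mem_cons.1 hq with hh | hh
    · subst hh; exact Or.inl h
    · exact Or.inr ⟨q, hh, h⟩
  · rintro (h | ⟨q, hq, h⟩)
    · exact ⟨p, List.mem_cons_self, h⟩
    · exact ⟨q, List.mem_cons_of_mem p hq, h⟩

lemma isCompactOpen_BUn {l : List (ℝ × ℝ)} (hok : ∀ p ∈ l, c.okp p) :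
    IsCompactOpen (c.BUn l) := by
  induction l with
  | nil => rw [c.BUn_nil]; exact ⟨isCompact_empty, isOpen_empty⟩
  | cons p t ih =>
    have hokp := hok p (List.mem_cons_self)
    have ihh := ih (fun q hq => hok q (List.mem_cons_of_mem p hq))
    rw [c.BUn_cons]
    exact ⟨(c.Bset_compact hokp).union ihh.1, (c.Bset_open hokp).union ihh.2⟩

lemma mu_good : Good c.mu := by
  rintro V ⟨hVc, hVo⟩ U ⟨hUc, hUo⟩ hUV
  obtain ⟨lU, hokU, hUeq⟩ := c.cover hUc hUo
  obtain ⟨lV, hokV, hVeq⟩ := c.cover hVc hVo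
  have hU' : c.mu U = volume (IcoU lU) := by rw [hUeq, c.mu_BUn hokU]
  have hV' : c.mu V = volume (IcoU lV) := by rw [hVeq, c.mu_BUn hokV]
  set s := (c.mu U).toReal with hsdef
  have hUne : c.mu U ≠ ⊤ := by rw [hU']; exact c.vol_IcoU_ne_top hokU
  have hVne : c.mu V ≠ ⊤ := by rw [hV']; exact c.vol_IcoU_ne_top hokV
  obtain ⟨lU', hU1, hU2, hU3⟩ := c.sep_norm lU.length lU rfl hokU
  have hsG : s ∈ c.G := by
    rw [hsdef, hU', ← hU3, c.toReal_vol_IcoU hU1 hU2]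
    exact c.sum_mem_G hU1
  have hs0 : 0 ≤ s := ENNReal.toReal_nonneg
  have hslt : s < (volume (IcoU lV)).toReal := by
    rw [← hV']
    exact (ENNReal.toReal_lt_toReal hUne hVne).2 hUV
  obtain ⟨lV', hok', hpw', heq'⟩ := c.sep_norm lV.length lV rfl hokV
  obtain ⟨l'', h1, h2, h3⟩ := c.good_Ico lV' hpw' hok' s hsG hs0
    (by rw [heq']; exact hslt.le)
  refine ⟨c.BUn l'', ?_, c.isCompactOpen_BUn h1, ?_⟩
  · rw [hVeq]
    exact c.BUn_subset h1 hokV (heq' ▸ h2)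
  · rw [c.mu_BUn h1, h3, ENNReal.ofReal_toReal hUne]

lemma foldr_max_facts (l : List (ℝ × ℝ)) :
    (∀ p ∈ l, p.2 ≤ (l.map Prod.snd).foldr max 0) ∧
    0 ≤ (l.map Prod.snd).foldr max 0 ∧
    ((∀ p ∈ l, p.2 < 1) → (l.map Prod.snd).foldr max 0 < 1) := by
  induction l with
  | nil => exact ⟨by simp, le_rfl, fun _ => one_pos⟩
  | cons p t ih =>
    obtain ⟨h1, h2, h3⟩ := ih
    simp only [List.map_cons, List.foldr_cons]
    refine ⟨?_, h2.trans (le_max_right _ _), ?_⟩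
    · intro q hq
      rcases List.mem_cons.1 hq with hh | hh
      · rw [hh]; exact le_max_left _ _
      · exact (h1 q hh).trans (le_max_right _ _)
    · intro hlt
      refine max_lt (hlt p (List.mem_cons_self)) (h3 ?_)
      exact fun q hq => hlt q (List.mem_cons_of_mem p hq)

lemma vol_IcoU_lt_one {l : List (ℝ × ℝ)} (hok : ∀ p ∈ l, c.okp p) :
    (volume (IcoU l)).toReal < 1 := by
  obtain ⟨h1, h2, h3⟩ := foldr_max_facts l
  set m := (l.map Prod.snd).foldr max 0 with hm
  have hm1 : m < 1 := h3 (fun q hq => c.okp_snd_lt_one (hok q hq))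
  have hsub : IcoU l ⊆ Set.Ico 0 m := by
    intro x hx
    obtain ⟨p, hp, hxp⟩ := mem_IcoU.1 hx
    exact ⟨le_trans (c.okp_fst_nonneg (hok p hp)) hxp.1, lt_of_lt_of_le hxp.2 (h1 p hp)⟩
  have hle : volume (IcoU l) ≤ ENNReal.ofReal m := by
    have hv : volume (Set.Ico (0:ℝ) m) = ENNReal.ofReal m := by
      rw [Real.volume_Ico, sub_zero]
    rw [← hv]
    exact measure_mono hsub
  have := ENNReal.toReal_mono ENNReal.ofReal_ne_top hle
  rw [ENNReal.toReal_ofReal h2] at this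
  linarith

lemma sreal_eq : Sreal c.mu = c.D := by
  ext r
  constructor
  · rintro ⟨U, ⟨hUc, hUo⟩, hne, rfl⟩
    obtain ⟨l, hok, hUeq⟩ := c.cover hUc hUo
    rw [hUeq, c.mu_BUn hok]
    obtain ⟨l', h1, h2, h3⟩ := c.sep_norm l.length l rfl hok
    rw [c.mem_D_iff]
    refine ⟨?_, ENNReal.toReal_nonneg, c.vol_IcoU_lt_one hok⟩
    rw [← h3, c.toReal_vol_IcoU h1 h2]
    exact c.sum_mem_G h1
  · intro hr
    by_cases h0 : r = 0
    · refine ⟨∅, ⟨isCompact_empty, isOpen_empty⟩, by simp, by simp [h0]⟩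
    · have hrpos : 0 < r := lt_of_le_of_ne (c.hD hr).1 (Ne.symm h0)
      have hro : c.okp (0, r) := ⟨c.zero_mem_D, hr, hrpos⟩
      refine ⟨c.Bset 0 r, ⟨c.Bset_compact hro, c.Bset_open hro⟩, ?_, ?_⟩
      · rw [show c.Bset 0 r = c.Bset (0, r).1 (0, r).2 from rfl, c.mu_Bset hro]
        exact ENNReal.ofReal_ne_top
      · rw [show c.Bset 0 r = c.Bset (0, r).1 (0, r).2 from rfl, c.mu_Bset hro]
        show (ENNReal.ofReal (r - 0)).toReal = r
        rw [ENNReal.toReal_ofReal (by linarith)]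
        ring

lemma mu_full : IsFull c.mu := by
  rintro U hUo ⟨x, hx⟩
  obtain ⟨V, ⟨p, hp, rfl⟩, hxV, hVU⟩ := c.isBasis.exists_subset_of_mem_open hx hUo
  have h1 : (0:ℝ≥0∞) < ENNReal.ofReal (p.2 - p.1) := by
    rw [ENNReal.ofReal_pos]
    linarith [hp.2.2]
  calc (0:ℝ≥0∞) < ENNReal.ofReal (p.2 - p.1) := h1
    _ = c.mu (c.Bset p.1 p.2) := (c.mu_Bset hp).symm
    _ ≤ c.mu U := measure_mono hVU

lemma noIsolated : NoIsolatedPoints ↥c.Xset := by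
  intro x hopen
  obtain ⟨V, ⟨p, hp, rfl⟩, hxV, hVx⟩ :=
    c.isBasis.exists_subset_of_mem_open (Set.mem_singleton x) hopen
  have h1 : c.mu (c.Bset p.1 p.2) ≤ c.mu {x} := measure_mono hVx
  rw [c.mu_Bset hp, c.mu_nonatomic x] at h1
  rw [nonpos_iff_eq_zero, ENNReal.ofReal_eq_zero] at h1
  linarith [hp.2.2]

lemma hasCompactOpenBasis : HasCompactOpenBasis ↥c.Xset := by
  refine ⟨c.BB, c.BB_countable, c.isBasis, ?_⟩
  rintro U ⟨p, hp, rfl⟩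
  exact ⟨c.Bset_compact hp, c.Bset_open hp⟩

end Ctx
end Stmt15

end StmtDev

theorem stmt15 (D : Set ℝ) (hD : D ⊆ Set.Ico (0 : ℝ) 1) (hcount : D.Countable)
    (hdense : Set.Ico (0 : ℝ) 1 ⊆ closure D)
    (hgrp : ∃ G : AddSubgroup ℝ, D = {x : ℝ | x ∈ G ∧ x ∈ Set.Ico (0 : ℝ) 1}) :
    ∃ (X : Type) (tX : TopologicalSpace X) (mX : MeasurableSpace X),
      @BorelSpace X tX mX ∧ @MetrizableSpace X tX ∧ @LocallyCompactSpace X tX ∧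
      @NoncompactSpace X tX ∧ @HasCompactOpenBasis X tX ∧ @NoIsolatedPoints X tX ∧
      ∃ μ : @Measure X mX,
        @IsProbabilityMeasure X mX μ ∧ @IsFull X tX mX μ ∧ @NonAtomic X mX μ ∧
        @Good X tX mX μ ∧ @Sreal X tX mX μ = D := by
  obtain ⟨G, hG⟩ := hgrp
  have hc' : (D \ {0}).Countable := hcount.mono Set.diff_subset
  have hcc : Countable ↥(D \ {0}) := hc'.to_subtype
  obtain ⟨f, hf⟩ := Countable.exists_injective_nat ↥(D \ {0})
  set w : ↥(D \ {0}) → ℝ := fun d => ((1:ℝ)/2) ^ (f d) with hw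
  have hwpos : ∀ d, 0 < w d := fun d => pow_pos (by norm_num) _
  have hwsum : Summable w := summable_geometric_two.comp_injective hf
  set c : Stmt15.Ctx := ⟨D, G, hcount, hD, hdense, hG, w, hwpos, hwsum⟩ with hc
  exact ⟨↥c.Xset, inferInstance, inferInstance, inferInstance, inferInstance,
    c.locallyCompact, c.noncompact, c.hasCompactOpenBasis, c.noIsolated,
    c.mu, c.mu_prob, c.mu_full, c.mu_nonatomic, c.mu_good, c.sreal_eq⟩
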